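/- Let m ≥ 0 and let p = (p_{AA'}) ∈ M₂(ℂ). The linear map P_p : V_{m+1,m} → V_{m,m+1} is bijective if and only if det p ≠ 0 (i.e. if and only if the covector modelled by p is not null). (Paper: Lemma 3.1.) -/

import Mathlib

/-!
Lemma 3.1: the symbol map `P_p : V_{m+1,m} → V_{m,m+1}` of the field equation
is bijective if and only if the covector `p` is not null, i.e. `det p ≠ 0`.
-/

open MvPolynomial

/-- `V a b`: the space of polynomials in `π₀, π₁` (the left variables) and
`τ₀, τ₁` (the right variables) that are homogeneous of degree `a` in `π`
and of degree `b` in `τ`, modelling totally symmetric spinors with `a`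
unprimed and `b` primed indices. -/
noncomputable def V (a b : ℕ) : Submodule ℂ (MvPolynomial (Fin 2 ⊕ Fin 2) ℂ) :=
  weightedHomogeneousSubmodule ℂ (Sum.elim (fun _ => 1) (fun _ => 0)) a ⊓
    weightedHomogeneousSubmodule ℂ (Sum.elim (fun _ => 0) (fun _ => 1)) b

/-- The symbol map `P_p(L) = Σ_{A,A'} p_{AA'} · τ_{A'} · ∂L/∂π_A`. -/
noncomputable def Pmap (p : Matrix (Fin 2) (Fin 2) ℂ) :
    MvPolynomial (Fin 2 ⊕ Fin 2) ℂ → MvPolynomial (Fin 2 ⊕ Fin 2) ℂ :=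
  fun L => ∑ A : Fin 2, ∑ A' : Fin 2,
    C (p A A') * (X (Sum.inr A') * pderiv (Sum.inl A) L)

namespace Lemma31

open Sum Finsupp

abbrev σ2 : Type := Fin 2 ⊕ Fin 2
abbrev R2 : Type := MvPolynomial σ2 ℂ

noncomputable def wL : σ2 → ℕ := Sum.elim (fun _ => 1) (fun _ => 0)
noncomputable def wR : σ2 → ℕ := Sum.elim (fun _ => 0) (fun _ => 1)

lemma memV_iff {a b : ℕ} {f : R2} :
    f ∈ V a b ↔ IsWeightedHomogeneous wL f a ∧ IsWeightedHomogeneous wR f b := Iff.rfl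

lemma weight_wL (s : σ2 →₀ ℕ) : weight wL s = s (inl 0) + s (inl 1) := by
  rw [weight_apply, Finsupp.sum_fintype _ _ (by intro i; simp)]
  simp [Fintype.sum_sum_type, Fin.sum_univ_two, wL]

lemma weight_wR (s : σ2 →₀ ℕ) : weight wR s = s (inr 0) + s (inr 1) := by
  rw [weight_apply, Finsupp.sum_fintype _ _ (by intro i; simp)]
  simp [Fintype.sum_sum_type, Fin.sum_univ_two, wR]

noncomputable def D (j i : σ2) : R2 →ₗ[ℂ] R2 :=
  (LinearMap.mulLeft ℂ (X j : R2)).comp (pderiv i).toLinearMap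

lemma D_apply (j i : σ2) (f : R2) : D j i f = X j * pderiv i f := rfl

lemma D_monomial (j i : σ2) (s : σ2 →₀ ℕ) (c : ℂ) :
    D j i (monomial s c) = monomial (s - single i 1 + single j 1) (c * s i) := by
  rw [D_apply, pderiv_monomial, X, monomial_mul, one_mul, add_comm]

lemma pderiv_pderiv (i k : σ2) (f : R2) :
    pderiv i (pderiv k f) = pderiv k (pderiv i f) := by
  induction f using MvPolynomial.induction_on' with
  | monomial s c =>
    rcases eq_or_ne i k with rfl | hik
    · rfl
    · simp only [pderiv_monomial]
      rw [tsub_right_comm]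
      congr 1
      rw [Finsupp.tsub_apply, Finsupp.tsub_apply, single_eq_of_ne hik,
        single_eq_of_ne (Ne.symm hik)]
      simp only [Nat.sub_zero]
      ring
  | add f g hf hg => simp [hf, hg]

lemma D_comm (j i l k : σ2) (f : R2) :
    D j i (D l k f) = D l k (D j i f)
      + (if i = l then D j k f else 0) - (if k = j then D l i f else 0) := by
  classical
  simp only [D_apply, pderiv_mul, pderiv_X]
  rw [pderiv_pderiv]
  split_ifs with h1 h2 h2
  · subst h1; subst h2; simp only [Pi.single_eq_same, mul_one]; ring
  · subst h1
    simp only [Pi.single_eq_same, Pi.single_eq_of_ne (Ne.symm h2), mul_one,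
      mul_zero, zero_mul, add_zero, zero_add, sub_zero]
    ring
  · subst h2
    simp only [Pi.single_eq_same, Pi.single_eq_of_ne (Ne.symm h1), mul_one,
      mul_zero, zero_mul, add_zero, zero_add]
    ring
  · simp only [Pi.single_eq_of_ne (Ne.symm h1), Pi.single_eq_of_ne (Ne.symm h2),
      mul_zero, zero_mul, add_zero, zero_add, sub_zero]
    ring

lemma weight_single (w : σ2 → ℕ) (i : σ2) : weight w (single i 1) = w i := by
  rw [weight_apply, Finsupp.sum_single_index (by simp), one_smul]

lemma isWH_D {w : σ2 → ℕ} {n n' : ℕ} (j i : σ2) (hw : w i + n' = w j + n) {f : R2}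
    (hf : IsWeightedHomogeneous w f n) :
    D j i f ∈ weightedHomogeneousSubmodule ℂ w n' := by
  have hrw : D j i f
      = ∑ s ∈ f.support, monomial (s - single i 1 + single j 1) (coeff s f * s i) := by
    conv_lhs => rw [← support_sum_monomial_coeff f]
    rw [map_sum]
    exact Finset.sum_congr rfl fun s _ => D_monomial _ _ _ _
  rw [hrw]
  apply Submodule.sum_mem
  intro s hs
  by_cases h0 : s i = 0
  · simp [h0]
  · rw [mem_weightedHomogeneousSubmodule]
    apply isWeightedHomogeneous_monomial
    have hle : single i 1 ≤ s := by
      rw [Finsupp.single_le_iff]; omega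
    have hsplit : (s - single i 1) + single i 1 = s := tsub_add_cancel_of_le hle
    have hws : weight w s = n := hf (MvPolynomial.mem_support_iff.mp hs)
    have h1 : weight w (s - single i 1) + w i = n := by
      rw [← hws, ← weight_single w i]
      rw [← map_add, hsplit]
    rw [map_add, weight_single]
    omega

lemma D_ri_memV {a b : ℕ} (A' A : Fin 2) {f : R2} (hf : f ∈ V (a + 1) b) :
    D (inr A') (inl A) f ∈ V a (b + 1) :=
  ⟨isWH_D _ _ (by simp only [wL, Sum.elim_inl, Sum.elim_inr]; omega) hf.1,
   isWH_D _ _ (by simp only [wR, Sum.elim_inl, Sum.elim_inr]; omega) hf.2⟩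

lemma D_ir_memV {a b : ℕ} (A A' : Fin 2) {f : R2} (hf : f ∈ V a (b + 1)) :
    D (inl A) (inr A') f ∈ V (a + 1) b :=
  ⟨isWH_D _ _ (by simp only [wL, Sum.elim_inl, Sum.elim_inr]; omega) hf.1,
   isWH_D _ _ (by simp only [wR, Sum.elim_inl, Sum.elim_inr]; omega) hf.2⟩

lemma D_diag_monomial (i : σ2) (s : σ2 →₀ ℕ) (c : ℂ) :
    D i i (monomial s c) = monomial s (c * s i) := by
  by_cases h0 : s i = 0
  · simp [D_monomial, h0]
  · rw [D_monomial]
    congr 1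
    rw [tsub_add_cancel_of_le]
    rw [Finsupp.single_le_iff]; omega

lemma euler_wL {n : ℕ} {f : R2} (hf : IsWeightedHomogeneous wL f n) :
    D (inl 0) (inl 0) f + D (inl 1) (inl 1) f = (n : ℂ) • f := by
  conv_lhs => rw [← support_sum_monomial_coeff f]
  conv_rhs => rw [← support_sum_monomial_coeff f]
  rw [map_sum, map_sum, Finset.smul_sum, ← Finset.sum_add_distrib]
  apply Finset.sum_congr rfl
  intro s hs
  rw [D_diag_monomial, D_diag_monomial, smul_monomial, ← map_add]
  congr 1
  have hws := hf (MvPolynomial.mem_support_iff.mp hs)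
  rw [weight_wL] at hws
  rw [smul_eq_mul, ← hws]
  push_cast
  ring

lemma euler_wR {n : ℕ} {f : R2} (hf : IsWeightedHomogeneous wR f n) :
    D (inr 0) (inr 0) f + D (inr 1) (inr 1) f = (n : ℂ) • f := by
  conv_lhs => rw [← support_sum_monomial_coeff f]
  conv_rhs => rw [← support_sum_monomial_coeff f]
  rw [map_sum, map_sum, Finset.smul_sum, ← Finset.sum_add_distrib]
  apply Finset.sum_congr rfl
  intro s hs
  rw [D_diag_monomial, D_diag_monomial, smul_monomial, ← map_add]
  congr 1
  have hws := hf (MvPolynomial.mem_support_iff.mp hs)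
  rw [weight_wR] at hws
  rw [smul_eq_mul, ← hws]
  push_cast
  ring

noncomputable def Pl (p : Matrix (Fin 2) (Fin 2) ℂ) : R2 →ₗ[ℂ] R2 :=
  p 0 0 • D (inr 0) (inl 0) + p 0 1 • D (inr 1) (inl 0)
    + p 1 0 • D (inr 0) (inl 1) + p 1 1 • D (inr 1) (inl 1)

noncomputable def Ql (p : Matrix (Fin 2) (Fin 2) ℂ) : R2 →ₗ[ℂ] R2 :=
  p 1 1 • D (inl 0) (inr 0) - p 1 0 • D (inl 0) (inr 1)
    - p 0 1 • D (inl 1) (inr 0) + p 0 0 • D (inl 1) (inr 1)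

lemma Pmap_eq (p : Matrix (Fin 2) (Fin 2) ℂ) (f : R2) : Pmap p f = Pl p f := by
  simp only [Pmap, Pl, Fin.sum_univ_two, LinearMap.add_apply, LinearMap.smul_apply,
    D_apply, smul_eq_C_mul]
  ring

lemma Pl_mem (p : Matrix (Fin 2) (Fin 2) ℂ) {a b : ℕ} {f : R2} (hf : f ∈ V (a + 1) b) :
    Pl p f ∈ V a (b + 1) := by
  simp only [Pl, LinearMap.add_apply, LinearMap.smul_apply]
  exact add_mem (add_mem (add_mem (Submodule.smul_mem _ _ (D_ri_memV 0 0 hf))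
    (Submodule.smul_mem _ _ (D_ri_memV 1 0 hf))) (Submodule.smul_mem _ _ (D_ri_memV 0 1 hf)))
    (Submodule.smul_mem _ _ (D_ri_memV 1 1 hf))

lemma Ql_mem (p : Matrix (Fin 2) (Fin 2) ℂ) {a b : ℕ} {f : R2} (hf : f ∈ V a (b + 1)) :
    Ql p f ∈ V (a + 1) b := by
  simp only [Ql, LinearMap.add_apply, LinearMap.sub_apply, LinearMap.smul_apply]
  exact add_mem (sub_mem (sub_mem (Submodule.smul_mem _ _ (D_ir_memV 0 0 hf))
    (Submodule.smul_mem _ _ (D_ir_memV 0 1 hf))) (Submodule.smul_mem _ _ (D_ir_memV 1 0 hf)))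
    (Submodule.smul_mem _ _ (D_ir_memV 1 1 hf))

lemma pderiv_inl_eq_zero {b : ℕ} {f : R2} (hf : f ∈ V 0 b) (A : Fin 2) :
    pderiv (inl A) f = 0 := by
  conv_lhs => rw [← support_sum_monomial_coeff f]
  rw [map_sum]
  apply Finset.sum_eq_zero
  intro s hs
  have hws : s (inl 0) + s (inl 1) = 0 := by
    rw [← weight_wL]; exact hf.1 (MvPolynomial.mem_support_iff.mp hs)
  have h0 : s (inl A) = 0 := by fin_cases A <;> simp only [Fin.mk_zero, Fin.mk_one, Fin.isValue] <;> omega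
  rw [pderiv_monomial, h0]
  simp

lemma pderiv_inr_eq_zero {a : ℕ} {f : R2} (hf : f ∈ V a 0) (A' : Fin 2) :
    pderiv (inr A') f = 0 := by
  conv_lhs => rw [← support_sum_monomial_coeff f]
  rw [map_sum]
  apply Finset.sum_eq_zero
  intro s hs
  have hws : s (inr 0) + s (inr 1) = 0 := by
    rw [← weight_wR]; exact hf.2 (MvPolynomial.mem_support_iff.mp hs)
  have h0 : s (inr A') = 0 := by fin_cases A' <;> simp only [Fin.mk_zero, Fin.mk_one, Fin.isValue] <;> omega
  rw [pderiv_monomial, h0]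
  simp

lemma Pl_zero (p : Matrix (Fin 2) (Fin 2) ℂ) {b : ℕ} {f : R2} (hf : f ∈ V 0 b) :
    Pl p f = 0 := by
  simp only [Pl, LinearMap.add_apply, LinearMap.smul_apply, D_apply,
    pderiv_inl_eq_zero hf]
  simp

lemma Ql_zero (p : Matrix (Fin 2) (Fin 2) ℂ) {a : ℕ} {f : R2} (hf : f ∈ V a 0) :
    Ql p f = 0 := by
  simp only [Ql, LinearMap.add_apply, LinearMap.sub_apply, LinearMap.smul_apply, D_apply,
    pderiv_inr_eq_zero hf]
  simp

lemma D_comm' (B B' A A' : Fin 2) (f : R2) :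
    D (inl B) (inr B') (D (inr A') (inl A) f)
      = D (inr A') (inl A) (D (inl B) (inr B') f)
        + (if B' = A' then D (inl B) (inl A) f else 0)
        - (if A = B then D (inr A') (inr B') f else 0) := by
  have h := D_comm (inl B) (inr B') (inr A') (inl A) f
  simpa using h

lemma key (p : Matrix (Fin 2) (Fin 2) ℂ) {a b : ℕ} {f : R2} (hf : f ∈ V a b) :
    Ql p (Pl p f) = Pl p (Ql p f) + (p.det * ((a : ℂ) - (b : ℂ))) • f := by
  have e1 := euler_wL hf.1
  have e2 := euler_wR hf.2
  have expand : (p.det * ((a : ℂ) - (b : ℂ))) • f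
      = (p 0 0 * p 1 1 - p 0 1 * p 1 0) • ((a : ℂ) • f)
        - (p 0 0 * p 1 1 - p 0 1 * p 1 0) • ((b : ℂ) • f) := by
    rw [smul_smul, smul_smul, ← sub_smul, Matrix.det_fin_two]
    ring_nf
  rw [expand, ← e1, ← e2]
  simp only [Pl, Ql, LinearMap.add_apply, LinearMap.sub_apply, LinearMap.smul_apply,
    map_add, map_sub, map_smul]
  simp only [D_comm']
  norm_num
  module

lemma Qpow_mem (p : Matrix (Fin 2) (Fin 2) ℂ) :
    ∀ (j a b : ℕ) {f : R2}, f ∈ V a (b + j) → (Ql p ^ j) f ∈ V (a + j) b := by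
  intro j
  induction j with
  | zero => intro a b f hf; simpa using hf
  | succ j ih =>
    intro a b f hf
    have h1 : f ∈ V a ((b + 1) + j) := by
      have : b + (j + 1) = (b + 1) + j := by omega
      rwa [this] at hf
    have h2 : (Ql p ^ j) f ∈ V (a + j) (b + 1) := ih a (b + 1) h1
    have h3 : (Ql p ^ (j + 1)) f = Ql p ((Ql p ^ j) f) := by
      rw [pow_succ', Module.End.mul_apply]
    rw [h3]
    have := Ql_mem p h2
    have harr : a + j + 1 = a + (j + 1) := by omega
    rwa [harr] at this

lemma Ppow_mem (p : Matrix (Fin 2) (Fin 2) ℂ) :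
    ∀ (k a b : ℕ) {f : R2}, f ∈ V (a + k) b → (Pl p ^ k) f ∈ V a (b + k) := by
  intro k
  induction k with
  | zero => intro a b f hf; simpa using hf
  | succ k ih =>
    intro a b f hf
    have h1 : f ∈ V ((a + 1) + k) b := by
      have : a + (k + 1) = (a + 1) + k := by omega
      rwa [this] at hf
    have h2 : (Pl p ^ k) f ∈ V (a + 1) (b + k) := ih (a + 1) b h1
    have h3 : (Pl p ^ (k + 1)) f = Pl p ((Pl p ^ k) f) := by
      rw [pow_succ', Module.End.mul_apply]
    rw [h3]
    have := Pl_mem p h2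
    have harr : b + k + 1 = b + (k + 1) := by omega
    rwa [harr] at this

lemma PQpow (p : Matrix (Fin 2) (Fin 2) ℂ) :
    ∀ (n a b : ℕ) (N : R2), N ∈ V a (b + n) →
      Pl p ((Ql p ^ (n + 1)) N) = (Ql p ^ (n + 1)) (Pl p N)
        - (p.det * (((n : ℂ) + 1) * (((a : ℂ) - (b : ℂ)) - (n : ℂ))
            + (n : ℂ) * ((n : ℂ) + 1))) • ((Ql p ^ n) N) := by
  intro n
  induction n with
  | zero =>
    intro a b N hN
    have hkey := key p (show N ∈ V a b by simpa using hN)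
    have h1 : (Ql p ^ (0 + 1)) N = Ql p N := by rw [pow_one]
    have h2 : (Ql p ^ (0 + 1)) (Pl p N) = Ql p (Pl p N) := by rw [pow_one]
    rw [h1, h2, hkey]
    simp only [pow_zero, Module.End.one_apply, Nat.cast_zero]
    match_scalars <;> ring
  | succ n ih =>
    intro a b N hN
    have hQN : (Ql p ^ (n + 1)) N ∈ V (a + (n + 1)) b := Qpow_mem p (n + 1) a b hN
    have hkey := key p hQN
    have hIH := ih a (b + 1) N (by
      have : b + (n + 1) = (b + 1) + n := by omega
      rwa [this] at hN)
    have hs1 : (Ql p ^ (n + 2)) N = Ql p ((Ql p ^ (n + 1)) N) := by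
      rw [pow_succ', Module.End.mul_apply]
    have hs2 : (Ql p ^ (n + 2)) (Pl p N) = Ql p ((Ql p ^ (n + 1)) (Pl p N)) := by
      rw [pow_succ', Module.End.mul_apply]
    have hs3 : (Ql p ^ (n + 1)) N = Ql p ((Ql p ^ n) N) := by
      rw [pow_succ', Module.End.mul_apply]
    -- from hkey : Ql (Pl (Q^{n+1} N)) = Pl (Ql (Q^{n+1} N)) + det*(a+n+1-b) • Q^{n+1} N
    have hmain : Pl p ((Ql p ^ (n + 2)) N)
        = Ql p (Pl p ((Ql p ^ (n + 1)) N))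
          - (p.det * (((a : ℂ) + (n : ℂ) + 1) - (b : ℂ))) • ((Ql p ^ (n + 1)) N) := by
      rw [hs1, hkey]
      push_cast
      module
    rw [hmain, hIH]
    rw [map_sub, map_smul, ← hs2, ← hs3]
    push_cast
    match_scalars <;> ring

lemma ker_triv (p : Matrix (Fin 2) (Fin 2) ℂ) (hdet : p.det ≠ 0) (m : ℕ) {d : R2}
    (hd : d ∈ V (m + 1) m) (h0 : Pl p d = 0) : d = 0 := by
  have hstep : ∀ k, k ≤ m →
      Pl p ((Ql p ^ (k + 1)) d) = (-(p.det * ((k : ℂ) + 1) ^ 2)) • ((Ql p ^ k) d) := by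
    intro k hk
    have hd' : d ∈ V (m + 1) ((m - k) + k) := by
      have h : (m - k) + k = m := by omega
      rwa [h]
    have hpq := PQpow p k (m + 1) (m - k) d hd'
    rw [h0, map_zero, zero_sub, ← neg_smul] at hpq
    rw [hpq]
    match_scalars
    push_cast [Nat.cast_sub hk]
    ring
  have htop : (Ql p ^ (m + 1)) d = 0 := by
    have h1 : (Ql p ^ m) d ∈ V ((m + 1) + m) 0 := by
      apply Qpow_mem p m (m + 1) 0
      simpa using hd
    rw [pow_succ', Module.End.mul_apply]
    exact Ql_zero p h1
  have hdesc : ∀ j, j ≤ m + 1 → (Ql p ^ (m + 1 - j)) d = 0 := by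
    intro j
    induction j with
    | zero => intro _; simpa using htop
    | succ j ihj =>
      intro hj
      have hQ : (Ql p ^ (m + 1 - j)) d = 0 := ihj (by omega)
      have hk : m - j ≤ m := by omega
      have hkk : m + 1 - j = (m - j) + 1 := by omega
      have hs := hstep (m - j) hk
      rw [← hkk, hQ, map_zero] at hs
      have hcoef : (-(p.det * (((m - j : ℕ) : ℂ) + 1) ^ 2)) ≠ 0 := by
        apply neg_ne_zero.mpr
        apply mul_ne_zero hdet
        apply pow_ne_zero
        exact Nat.cast_add_one_ne_zero _
      have := (smul_eq_zero.mp hs.symm).resolve_left hcoef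
      rwa [show m + 1 - (j + 1) = m - j by omega]
  have hfin := hdesc (m + 1) le_rfl
  simpa using hfin

lemma exists_preimage (p : Matrix (Fin 2) (Fin 2) ℂ) (hdet : p.det ≠ 0) (m : ℕ) {M : R2}
    (hM : M ∈ V m (m + 1)) : ∃ L ∈ V (m + 1) m, Pl p L = M := by
  classical
  set c : ℕ → ℂ := fun k =>
    (-1) ^ k / (p.det ^ (k + 1) * ((Nat.factorial (k + 1) : ℂ)) ^ 2) with hc
  set F : ℕ → R2 := fun k => (Ql p ^ k) ((Pl p ^ k) M) with hF
  have hPk_mem : ∀ k, k ≤ m → (Pl p ^ k) M ∈ V (m - k) ((m + 1) + k) := by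
    intro k hk
    apply Ppow_mem p k (m - k) (m + 1)
    have h : (m - k) + k = m := by omega
    rwa [h]
  refine ⟨∑ k ∈ Finset.range (m + 1), c k • ((Ql p ^ (k + 1)) ((Pl p ^ k) M)), ?_, ?_⟩
  · apply Submodule.sum_mem
    intro k hk
    have hk' : k ≤ m := by
      have := Finset.mem_range.mp hk; omega
    apply Submodule.smul_mem
    have h1 : (Pl p ^ k) M ∈ V (m - k) (m + (k + 1)) := by
      have h := hPk_mem k hk'
      have e : (m + 1) + k = m + (k + 1) := by omega
      rwa [e] at h
    have h2 := Qpow_mem p (k + 1) (m - k) m h1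
    have e2 : (m - k) + (k + 1) = m + 1 := by omega
    rwa [e2] at h2
  · have hterm : ∀ k, k ≤ m →
        Pl p ((Ql p ^ (k + 1)) ((Pl p ^ k) M))
          = F (k + 1) + (p.det * ((k : ℂ) + 1) ^ 2) • F k := by
      intro k hk
      have hpq := PQpow p k (m - k) (m + 1) ((Pl p ^ k) M) (hPk_mem k hk)
      have hps : Pl p ((Pl p ^ k) M) = (Pl p ^ (k + 1)) M := by
        rw [pow_succ', Module.End.mul_apply]
      rw [hps] at hpq
      rw [hpq, hF]
      rw [sub_eq_add_neg, ← neg_smul]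
      congr 1
      push_cast [Nat.cast_sub hk]
      ring
    have hF0 : F 0 = M := by simp [hF]
    have hFtop : F (m + 1) = 0 := by
      have h1 : (Pl p ^ m) M ∈ V 0 ((m + 1) + m) := by
        apply Ppow_mem p m 0 (m + 1)
        simpa using hM
      have h2 : (Pl p ^ (m + 1)) M = 0 := by
        rw [pow_succ', Module.End.mul_apply]
        exact Pl_zero p h1
      rw [hF]
      simp [h2]
    rw [map_sum]
    have hcong : ∀ k ∈ Finset.range (m + 1),
        Pl p (c k • (Ql p ^ (k + 1)) ((Pl p ^ k) M))
          = c k • F (k + 1) + (c k * (p.det * ((k : ℂ) + 1) ^ 2)) • F k := by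
      intro k hk
      rw [map_smul, hterm k (by have := Finset.mem_range.mp hk; omega), smul_add, smul_smul]
    rw [Finset.sum_congr rfl hcong, Finset.sum_add_distrib,
      Finset.sum_range_succ (f := fun k => c k • F (k + 1)),
      Finset.sum_range_succ' (f := fun k => (c k * (p.det * ((k : ℂ) + 1) ^ 2)) • F k)]
    rw [hFtop, smul_zero, add_zero, hF0]
    have hfac_ne : ∀ n : ℕ, ((Nat.factorial n : ℂ)) ≠ 0 := by
      intro n
      exact_mod_cast Nat.cast_ne_zero.mpr (Nat.factorial_ne_zero n)
    have he0 : c 0 * (p.det * ((0 : ℂ) + 1) ^ 2) = 1 := by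
      simp [hc, Nat.factorial]
      field_simp
    rw [show ((0 : ℕ) : ℂ) = (0 : ℂ) by norm_num] at *
    have hzero : ∑ k ∈ Finset.range m, (c k • F (k + 1))
        + ∑ k ∈ Finset.range m, ((c (k + 1) * (p.det * (((k + 1 : ℕ) : ℂ) + 1) ^ 2)) • F (k + 1)) = 0 := by
      rw [← Finset.sum_add_distrib]
      apply Finset.sum_eq_zero
      intro k _
      rw [← add_smul]
      have hrec : c k + c (k + 1) * (p.det * (((k + 1 : ℕ) : ℂ) + 1) ^ 2) = 0 := by
        rw [hc]
        have hfs : (Nat.factorial (k + 2) : ℂ) = ((k : ℂ) + 2) * (Nat.factorial (k + 1) : ℂ) := by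
          rw [Nat.factorial_succ]
          push_cast
          ring
        simp only []
        rw [hfs]
        have h1 := hfac_ne (k + 1)
        have h2 : ((k : ℂ) + 2) ≠ 0 := by
          intro h
          apply Nat.cast_add_one_ne_zero (R := ℂ) (k + 1)
          push_cast
          linear_combination h
        have h4 : p.det ^ (k + 2) ≠ 0 := pow_ne_zero _ hdet
        have h5 : p.det ^ (k + 1) ≠ 0 := pow_ne_zero _ hdet
        field_simp
        push_cast
        ring
      rw [hrec, zero_smul]
    rw [he0, one_smul, ← add_assoc, hzero, zero_add]

lemma one_memV : (1 : R2) ∈ V 0 0 :=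
  ⟨isWeightedHomogeneous_one ℂ _, isWeightedHomogeneous_one ℂ _⟩

lemma mul_memV {a b a' b' : ℕ} {f g : R2} (hf : f ∈ V a b) (hg : g ∈ V a' b') :
    f * g ∈ V (a + a') (b + b') :=
  ⟨hf.1.mul hg.1, hf.2.mul hg.2⟩

lemma pow_memV {a b : ℕ} {f : R2} (hf : f ∈ V a b) (n : ℕ) :
    f ^ n ∈ V (n * a) (n * b) := by
  induction n with
  | zero => simpa using one_memV
  | succ n ih =>
    have h := mul_memV ih hf
    have e1 : n * a + a = (n + 1) * a := by ring
    have e2 : n * b + b = (n + 1) * b := by ring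
    rw [e1, e2] at h
    rw [pow_succ]
    exact h

lemma Pmap_zero (p : Matrix (Fin 2) (Fin 2) ℂ) : Pmap p 0 = 0 := by
  simp [Pmap]

theorem main (m : ℕ) (p : Matrix (Fin 2) (Fin 2) ℂ) :
    Set.BijOn (Pmap p) (V (m + 1) m : Set (MvPolynomial (Fin 2 ⊕ Fin 2) ℂ))
      (V m (m + 1) : Set (MvPolynomial (Fin 2 ⊕ Fin 2) ℂ)) ↔ p.det ≠ 0 := by
  constructor
  · intro hbij
    by_contra hdet
    obtain ⟨v, hv0, hvp⟩ := Matrix.exists_vecMul_eq_zero_iff.mpr hdet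
    set ℓ : R2 := C (v 0) * X (inl 0) + C (v 1) * X (inl 1) with hℓ
    set L : R2 := ℓ ^ (m + 1) * X (inr 0) ^ m with hLdef
    have hℓV : ℓ ∈ V 1 0 := by
      apply add_mem
      · rw [C_mul_X_eq_monomial]
        exact ⟨isWeightedHomogeneous_monomial _ _ _ (weight_single wL (inl 0)),
          isWeightedHomogeneous_monomial _ _ _ (weight_single wR (inl 0))⟩
      · rw [C_mul_X_eq_monomial]
        exact ⟨isWeightedHomogeneous_monomial _ _ _ (weight_single wL (inl 1)),
          isWeightedHomogeneous_monomial _ _ _ (weight_single wR (inl 1))⟩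
    have hXV : (X (inr 0) : R2) ∈ V 0 1 := by
      rw [X]
      exact ⟨isWeightedHomogeneous_monomial _ _ _ (weight_single wL (inr 0)),
        isWeightedHomogeneous_monomial _ _ _ (weight_single wR (inr 0))⟩
    have hLV : L ∈ V (m + 1) m := by
      have h1 := pow_memV hℓV (m + 1)
      have h2 := pow_memV hXV m
      have h := mul_memV h1 h2
      have e1 : (m + 1) * 1 + m * 0 = m + 1 := by ring
      have e2 : (m + 1) * 0 + m * 1 = m := by ring
      rw [e1, e2] at h
      exact h
    have hvne : v 0 ≠ 0 ∨ v 1 ≠ 0 := by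
      by_contra hcon
      push_neg at hcon
      apply hv0
      funext i
      fin_cases i
      · exact hcon.1
      · exact hcon.2
    have hℓ0 : ℓ ≠ 0 := by
      intro h
      rcases hvne with hv | hv
      · apply hv
        have := congrArg (coeff (single (inl 0) 1)) h
        rw [hℓ, C_mul_X_eq_monomial, C_mul_X_eq_monomial] at this
        simpa [coeff_monomial, Finsupp.single_eq_single_iff] using this
      · apply hv
        have := congrArg (coeff (single (inl 1) 1)) h
        rw [hℓ, C_mul_X_eq_monomial, C_mul_X_eq_monomial] at this
        simpa [coeff_monomial, Finsupp.single_eq_single_iff] using this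
    have hLne : L ≠ 0 :=
      mul_ne_zero (pow_ne_zero _ hℓ0) (pow_ne_zero _ (X_ne_zero _))
    have hder : ∀ A : Fin 2,
        pderiv (inl A) L = C (v A) * (((m + 1 : ℕ) : R2) * ℓ ^ m * X (inr 0) ^ m) := by
      intro A
      have hdX : pderiv (inl A) ((X (inr 0) : R2) ^ m) = 0 := by
        rw [pderiv_pow, pderiv_X_of_ne (by simp), mul_zero]
      have hdl : pderiv (inl A) ℓ = C (v A) := by
        rw [hℓ]
        fin_cases A
        · simp only [Fin.mk_zero, Fin.mk_one, Fin.isValue]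
          rw [map_add, pderiv_C_mul, pderiv_C_mul, pderiv_X_self,
            pderiv_X_of_ne (by simp)]
          simp
        · simp only [Fin.mk_zero, Fin.mk_one, Fin.isValue]
          rw [map_add, pderiv_C_mul, pderiv_C_mul, pderiv_X_self,
            pderiv_X_of_ne (by simp)]
          simp
      rw [hLdef, pderiv_mul, hdX, mul_zero, add_zero, pderiv_pow, hdl]
      push_cast
      ring
    have hPL0 : Pmap p L = 0 := by
      have h0 : v 0 * p 0 0 + v 1 * p 1 0 = 0 := by
        have := congrFun hvp 0
        simpa [Matrix.vecMul, dotProduct, Fin.sum_univ_two] using this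
      have h1 : v 0 * p 0 1 + v 1 * p 1 1 = 0 := by
        have := congrFun hvp 1
        simpa [Matrix.vecMul, dotProduct, Fin.sum_univ_two] using this
      have hc0 : C (v 0) * C (p 0 0) + C (v 1) * C (p 1 0) = (0 : R2) := by
        rw [← map_mul, ← map_mul, ← map_add, h0, map_zero]
      have hc1 : C (v 0) * C (p 0 1) + C (v 1) * C (p 1 1) = (0 : R2) := by
        rw [← map_mul, ← map_mul, ← map_add, h1, map_zero]
      simp only [Pmap, Fin.sum_univ_two, hder]
      linear_combination
        (X (inr 0) * (((m + 1 : ℕ) : R2) * ℓ ^ m * X (inr 0) ^ m)) * hc0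
          + (X (inr 1) * (((m + 1 : ℕ) : R2) * ℓ ^ m * X (inr 0) ^ m)) * hc1
    apply hLne
    apply hbij.injOn (SetLike.mem_coe.mpr hLV) (SetLike.mem_coe.mpr (zero_mem _))
    rw [hPL0, Pmap_zero]
  · intro hdet
    refine ⟨?_, ?_, ?_⟩
    · intro f hf
      rw [SetLike.mem_coe] at hf ⊢
      rw [Pmap_eq]
      exact Pl_mem p hf
    · intro f hf g hg hfg
      rw [SetLike.mem_coe] at hf hg
      have hd : f - g ∈ V (m + 1) m := sub_mem hf hg
      have h0 : Pl p (f - g) = 0 := by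
        rw [map_sub, ← Pmap_eq, ← Pmap_eq, hfg, sub_self]
      have := ker_triv p hdet m hd h0
      exact sub_eq_zero.mp this
    · intro M hM
      rw [SetLike.mem_coe] at hM
      obtain ⟨L, hL, hPL⟩ := exists_preimage p hdet m hM
      exact ⟨L, SetLike.mem_coe.mpr hL, by rw [Pmap_eq]; exact hPL⟩

end Lemma31

theorem Pmap_bijOn_iff_det_ne_zero (m : ℕ) (p : Matrix (Fin 2) (Fin 2) ℂ) :
    Set.BijOn (Pmap p) (V (m + 1) m : Set (MvPolynomial (Fin 2 ⊕ Fin 2) ℂ))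
      (V m (m + 1) : Set (MvPolynomial (Fin 2 ⊕ Fin 2) ℂ)) ↔ p.det ≠ 0 :=
  Lemma31.main m p
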